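/- Let t* be a critical point of h(t; σ) = 2(1 − e^{−t})/(2 + t²/σ²) on t > 0 with σ ≤ 1/(2√2). Then t* satisfies (t*)²·(2(e^{t*} − 1)/t* − 1) = 2σ², and consequently 0.62·√2·σ ≤ t* ≤ √2·σ. -/

import Mathlib

open Real

set_option maxHeartbeats 1000000

/-- `h t = 2(1 - e^{-t})/(2 + t²/σ²)` -/
noncomputable def h (σ t : ℝ) : ℝ := 2 * (1 - Real.exp (-t)) / (2 + t^2 / σ^2)

theorem critical_point_eq_and_bounds (σ tstar : ℝ) (hσ : 0 < σ)
    (hσ' : σ ≤ 1 / (2 * Real.sqrt 2)) (ht : 0 < tstar)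
    (hcrit : deriv (h σ) tstar = 0) :
    tstar^2 * (2 * (Real.exp tstar - 1) / tstar - 1) = 2 * σ^2 ∧
      0.62 * (Real.sqrt 2 * σ) ≤ tstar ∧ tstar ≤ Real.sqrt 2 * σ := by
  have hσ2 : (0:ℝ) < σ^2 := by positivity
  have hD0 : (2 + tstar^2/σ^2) ≠ 0 := by positivity
  have hN : HasDerivAt (fun t : ℝ => 2*(1 - Real.exp (-t))) (2 * Real.exp (-tstar)) tstar := by
    have h1 : HasDerivAt (fun t : ℝ => Real.exp (-t)) (-Real.exp (-tstar)) tstar := by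
      simpa [Function.comp_def] using (Real.hasDerivAt_exp (-tstar)).comp tstar (hasDerivAt_neg tstar)
    simpa using ((hasDerivAt_const tstar (1:ℝ)).sub h1).const_mul (2:ℝ)
  have hDd : HasDerivAt (fun t : ℝ => 2 + t^2/σ^2) (2*tstar/σ^2) tstar := by
    have h2 : HasDerivAt (fun t : ℝ => t^2) (2*tstar) tstar := by
      simpa using (hasDerivAt_pow 2 tstar)
    exact (h2.div_const (σ^2)).const_add 2
  have hder := (hN.div hDd hD0).deriv
  have hcrit' : (2 * Real.exp (-tstar) * (2 + tstar^2/σ^2)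
      - 2*(1 - Real.exp (-tstar)) * (2*tstar/σ^2)) / (2 + tstar^2/σ^2)^2 = 0 := by
    rw [show h σ = fun t => 2*(1 - Real.exp (-t))/(2 + t^2/σ^2) from rfl] at hcrit
    rw [← hder]
    exact hcrit
  have hnum : 2 * Real.exp (-tstar) * (2 + tstar^2/σ^2)
      - 2*(1 - Real.exp (-tstar)) * (2*tstar/σ^2) = 0 := by
    rcases div_eq_zero_iff.mp hcrit' with h | h
    · exact h
    · exact absurd h (pow_ne_zero 2 hD0)
  have hexp : Real.exp (-tstar) * Real.exp tstar = 1 := by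
    rw [← Real.exp_add]; simp
  have hexppos := Real.exp_pos tstar
  have hexppos' := Real.exp_pos (-tstar)
  -- key equation: 2 t (e^t - 1) - t² = 2σ²
  have key : 2*tstar*(Real.exp tstar - 1) - tstar^2 = 2*σ^2 := by
    field_simp at hnum
    nlinarith [hnum, hexp, hexppos, hexppos', sq_nonneg tstar, mul_pos hexppos' hσ2]
  -- upper bound: t² ≤ 2σ² since e^t - 1 ≥ t
  have hexp_ge : tstar + 1 ≤ Real.exp tstar := Real.add_one_le_exp tstar
  have ht2 : tstar^2 ≤ 2*σ^2 := by nlinarith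
  have hs : Real.sqrt 2 ^ 2 = 2 := Real.sq_sqrt (by norm_num)
  have hspos : (0:ℝ) < Real.sqrt 2 := Real.sqrt_pos.mpr (by norm_num)
  have hupper : tstar ≤ Real.sqrt 2 * σ := by
    nlinarith [mul_pos hspos hσ, sq_nonneg (tstar - Real.sqrt 2 * σ), sq_nonneg (tstar + Real.sqrt 2 * σ)]
  -- t ≤ 1/2
  have ht12 : tstar ≤ 1/2 := by
    have h1 : Real.sqrt 2 * σ ≤ Real.sqrt 2 * (1 / (2 * Real.sqrt 2)) :=
      mul_le_mul_of_nonneg_left hσ' hspos.le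
    have h2 : Real.sqrt 2 * (1 / (2 * Real.sqrt 2)) = 1/2 := by
      field_simp
    linarith
  -- e^{1/2} < 1.7
  have he12 : Real.exp (1/2) < 1.7 := by
    have h1 : Real.exp (1/2) * Real.exp (1/2) = Real.exp 1 := by
      rw [← Real.exp_add]; norm_num
    have h2 : Real.exp 1 < 2.7182818286 := Real.exp_one_lt_d9
    nlinarith [Real.exp_pos (1/2)]
  have hexp_le : Real.exp tstar < 1.7 :=
    lt_of_le_of_lt (Real.exp_le_exp.mpr ht12) he12
  -- e^t - 1 ≤ t e^t
  have hub : Real.exp tstar - 1 ≤ tstar * Real.exp tstar := by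
    have h1 : 1 - tstar ≤ Real.exp (-tstar) := by
      have := Real.add_one_le_exp (-tstar); linarith
    have h2 := mul_le_mul_of_nonneg_left h1 hexppos.le
    nlinarith [hexp]
  -- 2σ² ≤ 2.4 t²
  have h2s : 2*σ^2 ≤ 2.4 * tstar^2 := by
    have a1 : 2*tstar*(Real.exp tstar - 1) ≤ 2*tstar*(tstar*Real.exp tstar) :=
      mul_le_mul_of_nonneg_left hub (by positivity)
    have a2 : tstar^2 * Real.exp tstar ≤ tstar^2 * 1.7 :=
      mul_le_mul_of_nonneg_left hexp_le.le (sq_nonneg tstar)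
    nlinarith [key]
  have hlow : 0.62 * (Real.sqrt 2 * σ) ≤ tstar := by
    have hc : (0.62 * (Real.sqrt 2 * σ))^2 = 0.7688 * σ^2 := by
      rw [mul_pow, mul_pow, hs]; ring
    have hc2 : (0.62 * (Real.sqrt 2 * σ))^2 ≤ tstar^2 := by rw [hc]; linarith
    exact (pow_le_pow_iff_left₀ (by positivity) ht.le two_ne_zero).mp hc2
  refine ⟨?_, hlow, hupper⟩
  field_simp
  nlinarith [key]
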